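/- For positive reals p ≠ q and nonnegative integer n, the (p,q)-shifted factorial admits the expansion ((a,b);(p,q))_n = ∑_{k=0}^{n} [n choose k]_{p,q} (-1)^k p^{(n-k)(n-k-1)/2} q^{k(k-1)/2} a^{n-k} b^k, where ((a,b);(p,q))_n = ∏_{j=0}^{n-1} (a p^j - b q^j). -/
import Mathlib


noncomputable def pqFact (p q : ℝ) (n : ℕ) : ℝ :=
  ∏ j ∈ Finset.range n, (p ^ (j + 1) - q ^ (j + 1)) / (p - q)

noncomputable def pqBinom (p q : ℝ) (n k : ℕ) : ℝ :=
  pqFact p q n / (pqFact p q k * pqFact p q (n - k))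

noncomputable def pqShifted (a b p q : ℝ) (n : ℕ) : ℝ :=
  ∏ j ∈ Finset.range n, (a * p ^ j - b * q ^ j)

noncomputable def gTerm (p q a b : ℝ) (m k : ℕ) : ℝ :=
  pqBinom p q m k * (-1) ^ k * p ^ ((m - k) * (m - k - 1) / 2) *
    q ^ (k * (k - 1) / 2) * a ^ (m - k) * b ^ k

lemma pq_pow_ne (p q : ℝ) (hp : 0 < p) (hq : 0 < q) (hne : p ≠ q) (m : ℕ) :
    p ^ (m + 1) - q ^ (m + 1) ≠ 0 := by
  rcases lt_or_gt_of_ne hne with h | h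
  · exact sub_ne_zero.mpr (ne_of_lt (pow_lt_pow_left₀ h hp.le (Nat.succ_ne_zero m)))
  · exact sub_ne_zero.mpr (ne_of_gt (pow_lt_pow_left₀ h hq.le (Nat.succ_ne_zero m)))

lemma pqFact_ne (p q : ℝ) (hp : 0 < p) (hq : 0 < q) (hne : p ≠ q) (n : ℕ) :
    pqFact p q n ≠ 0 := by
  unfold pqFact
  rw [Finset.prod_ne_zero_iff]
  intro j _
  exact div_ne_zero (pq_pow_ne p q hp hq hne j) (sub_ne_zero.mpr hne)

lemma pqFact_succ (p q : ℝ) (n : ℕ) :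
    pqFact p q (n + 1) = pqFact p q n * ((p ^ (n + 1) - q ^ (n + 1)) / (p - q)) :=
  Finset.prod_range_succ _ n

lemma pqBinom_zero (p q : ℝ) (hp : 0 < p) (hq : 0 < q) (hne : p ≠ q) (n : ℕ) :
    pqBinom p q n 0 = 1 := by
  unfold pqBinom
  rw [show pqFact p q 0 = 1 from Finset.prod_range_zero _, Nat.sub_zero, one_mul,
    div_self (pqFact_ne p q hp hq hne n)]

lemma pqBinom_self (p q : ℝ) (hp : 0 < p) (hq : 0 < q) (hne : p ≠ q) (n : ℕ) :
    pqBinom p q n n = 1 := by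
  unfold pqBinom
  rw [Nat.sub_self, show pqFact p q 0 = 1 from Finset.prod_range_zero _, mul_one,
    div_self (pqFact_ne p q hp hq hne n)]

lemma pqPascal (p q : ℝ) (hp : 0 < p) (hq : 0 < q) (hne : p ≠ q) {n k : ℕ} (h : k < n) :
    pqBinom p q (n + 1) (k + 1)
      = p ^ (k + 1) * pqBinom p q n (k + 1) + q ^ (n - k) * pqBinom p q n k := by
  obtain ⟨m, rfl⟩ : ∃ m, n = k + 1 + m := ⟨n - (k + 1), by omega⟩
  have hpq : p - q ≠ 0 := sub_ne_zero.mpr hne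
  have hFk : pqFact p q k ≠ 0 := pqFact_ne p q hp hq hne k
  have hFm : pqFact p q m ≠ 0 := pqFact_ne p q hp hq hne m
  have hFkm : pqFact p q (k + 1 + m) ≠ 0 := pqFact_ne p q hp hq hne _
  have hEk : p ^ (k + 1) - q ^ (k + 1) ≠ 0 := pq_pow_ne p q hp hq hne k
  have hEm : p ^ (m + 1) - q ^ (m + 1) ≠ 0 := pq_pow_ne p q hp hq hne m
  unfold pqBinom
  have e1 : k + 1 + m - k = m + 1 := by omega
  have e2 : k + 1 + m - (k + 1) = m := by omega
  have e3 : k + 1 + m + 1 - (k + 1) = m + 1 := by omega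
  rw [e1, e2, e3]
  rw [pqFact_succ p q (k + 1 + m), pqFact_succ p q m, pqFact_succ p q k]
  rw [show k + 1 + m + 1 = (k + 1) + (m + 1) from by omega,
    pow_add p (k + 1) (m + 1), pow_add q (k + 1) (m + 1)]
  field_simp
  ring

theorem pqShifted_expansion (p q : ℝ) (hp : 0 < p) (hq : 0 < q) (hne : p ≠ q)
    (a b : ℝ) (n : ℕ) :
    pqShifted a b p q n =
      ∑ k ∈ Finset.range (n + 1),
        pqBinom p q n k * (-1) ^ k * p ^ ((n - k) * (n - k - 1) / 2) *
          q ^ (k * (k - 1) / 2) * a ^ (n - k) * b ^ k := by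
  induction n with
  | zero =>
      simp [pqShifted, pqBinom, pqFact]
  | succ n ih =>
      show pqShifted a b p q (n + 1) = ∑ k ∈ Finset.range (n + 1 + 1), gTerm p q a b (n + 1) k
      replace ih : pqShifted a b p q n = ∑ k ∈ Finset.range (n + 1), gTerm p q a b n k := ih
      have h0 : gTerm p q a b (n + 1) 0 = a * p ^ n * gTerm p q a b n 0 := by
        simp only [gTerm, Nat.sub_zero, pow_zero, mul_one,
          pqBinom_zero p q hp hq hne]
        rw [Nat.triangle_succ n, pow_add, pow_succ]
        ring
      have hlast : gTerm p q a b (n + 1) (n + 1) = -(b * q ^ n * gTerm p q a b n n) := by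
        simp only [gTerm, Nat.sub_self, pow_zero, mul_one, one_mul,
          pqBinom_self p q hp hq hne]
        rw [Nat.triangle_succ n, pow_add, pow_succ]
        ring
      have hmid : ∀ k ∈ Finset.range n, gTerm p q a b (n + 1) (k + 1)
          = a * p ^ n * gTerm p q a b n (k + 1) - b * q ^ n * gTerm p q a b n k := by
        intro k hk
        rw [Finset.mem_range] at hk
        obtain ⟨m, rfl⟩ : ∃ m, n = k + 1 + m := ⟨n - (k + 1), by omega⟩
        simp only [gTerm]
        rw [pqPascal p q hp hq hne (show k < k + 1 + m from by omega)]
        have e1 : k + 1 + m + 1 - (k + 1) = m + 1 := by omega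
        have e2 : k + 1 + m - (k + 1) = m := by omega
        have e3 : k + 1 + m - k = m + 1 := by omega
        rw [e1, e2, e3, Nat.triangle_succ m, Nat.triangle_succ k]
        simp only [pow_add, pow_succ, pow_zero, one_mul]
        ring
      have hS : pqShifted a b p q (n + 1)
          = pqShifted a b p q n * (a * p ^ n - b * q ^ n) := Finset.prod_range_succ _ n
      rw [hS, ih]
      rw [Finset.sum_range_succ' (gTerm p q a b (n + 1)) (n + 1),
        Finset.sum_range_succ (fun k => gTerm p q a b (n + 1) (k + 1)) n]
      rw [Finset.sum_congr rfl hmid, h0, hlast]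
      have e1 : ∑ k ∈ Finset.range (n + 1), a * p ^ n * gTerm p q a b n k
          = (∑ k ∈ Finset.range n, a * p ^ n * gTerm p q a b n (k + 1))
            + a * p ^ n * gTerm p q a b n 0 :=
        Finset.sum_range_succ' _ n
      have e2 : ∑ k ∈ Finset.range (n + 1), b * q ^ n * gTerm p q a b n k
          = (∑ k ∈ Finset.range n, b * q ^ n * gTerm p q a b n k)
            + b * q ^ n * gTerm p q a b n n :=
        Finset.sum_range_succ _ n
      have e3 : (∑ k ∈ Finset.range (n + 1), gTerm p q a b n k) * (a * p ^ n - b * q ^ n)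
          = (∑ k ∈ Finset.range (n + 1), a * p ^ n * gTerm p q a b n k)
            - ∑ k ∈ Finset.range (n + 1), b * q ^ n * gTerm p q a b n k := by
        rw [← Finset.sum_sub_distrib, Finset.sum_mul]
        exact Finset.sum_congr rfl fun k _ => by ring
      rw [e3, e1, e2, Finset.sum_sub_distrib]
      ring
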